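/- Let κ > 0 and j ∈ ℝ, and let h : ℝ → ℝ satisfy h(t) = (κ/2) t² + (j/6) t³ + o(t³) as t → 0. Let ε₀ > 0 and let t₁ : (0, ε₀) → ℝ be a function with t₁(ε) > 0 for all ε ∈ (0, ε₀), t₁(ε) → 0 as ε → 0⁺, and h(t₁(ε)) = ε for all ε ∈ (0, ε₀). Then t₁(ε) = √(2ε/κ) − (j/(3κ²)) ε + o(ε) as ε → 0⁺. -/

import Mathlib

open Asymptotics Filter

/-- If h(t) = (κ/2)t² + (j/6)t³ + o(t³) with κ > 0, and t₁(ε) > 0 satisfies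
t₁(ε) → 0 as ε → 0⁺ and h(t₁(ε)) = ε on (0, ε₀), then
t₁(ε) = √(2ε/κ) − (j/(3κ²))ε + o(ε) as ε → 0⁺. -/
theorem stmt_7 (κ j : ℝ) (hκ : 0 < κ) (h : ℝ → ℝ)
    (hh : (fun t : ℝ => h t - (κ / 2 * t ^ 2 + j / 6 * t ^ 3)) =o[nhds 0]
      fun t : ℝ => t ^ 3)
    (ε₀ : ℝ) (hε₀ : 0 < ε₀) (t₁ : ℝ → ℝ)
    (hpos : ∀ ε ∈ Set.Ioo 0 ε₀, 0 < t₁ ε)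
    (hlim : Tendsto t₁ (nhdsWithin 0 (Set.Ioi 0)) (nhds 0))
    (hroot : ∀ ε ∈ Set.Ioo 0 ε₀, h (t₁ ε) = ε) :
    (fun ε : ℝ => t₁ ε - (Real.sqrt (2 * ε / κ) - j / (3 * κ ^ 2) * ε))
      =o[nhdsWithin 0 (Set.Ioi 0)] fun ε : ℝ => ε := by
  set l := nhdsWithin (0:ℝ) (Set.Ioi 0) with hl
  set ρ : ℝ → ℝ := fun ε => (h (t₁ ε) - (κ / 2 * (t₁ ε) ^ 2 + j / 6 * (t₁ ε) ^ 3)) / (t₁ ε) ^ 3 with hρdef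
  set q : ℝ → ℝ := fun ε => ε / (t₁ ε) ^ 2 with hqdef
  have hmem : ∀ᶠ ε in l, ε ∈ Set.Ioo 0 ε₀ := by
    rw [hl]
    exact Ioo_mem_nhdsGT_of_mem ⟨le_rfl, hε₀⟩
  have htpos : ∀ᶠ ε in l, 0 < t₁ ε := hmem.mono fun ε hε => hpos ε hε
  have hrt : ∀ᶠ ε in l, h (t₁ ε) = ε := hmem.mono fun ε hε => hroot ε hε
  have hρlim : Tendsto ρ l (nhds 0) := (hh.tendsto_div_nhds_zero).comp hlim
  have hkey : ∀ᶠ ε in l, ε = κ / 2 * (t₁ ε) ^ 2 + (j / 6 + ρ ε) * (t₁ ε) ^ 3 := by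
    filter_upwards [htpos, hrt] with ε ht hr
    have ht3 : (t₁ ε) ^ 3 ≠ 0 := pow_ne_zero _ (ne_of_gt ht)
    have hm : ρ ε * (t₁ ε) ^ 3 = h (t₁ ε) - (κ / 2 * (t₁ ε) ^ 2 + j / 6 * (t₁ ε) ^ 3) :=
      div_mul_cancel₀ _ ht3
    linear_combination -hr - hm
  have hq : Tendsto q l (nhds (κ / 2)) := by
    have h1 : Tendsto (fun ε => κ / 2 + (j / 6 + ρ ε) * t₁ ε) l (nhds (κ / 2)) := by
      have := (((tendsto_const_nhds (x := j / 6)).add hρlim).mul hlim).const_add (κ / 2)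
      simpa using this
    refine h1.congr' ?_
    filter_upwards [htpos, hkey] with ε ht hk
    have ht2 : (t₁ ε) ^ 2 ≠ 0 := pow_ne_zero _ (ne_of_gt ht)
    rw [hqdef]
    simp only
    rw [eq_div_iff ht2]
    linear_combination -hk
  have hS : Tendsto (fun ε => Real.sqrt (2 * q ε / κ)) l (nhds 1) := by
    have h2 : Tendsto (fun ε => 2 * q ε / κ) l (nhds 1) := by
      have := (hq.const_mul 2).div_const κ
      have h3 : 2 * (κ / 2) / κ = 1 := by field_simp
      rwa [h3] at this
    have hc := (Real.continuous_sqrt.tendsto 1).comp h2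
    rwa [Real.sqrt_one] at hc
  have hinv : Tendsto (fun ε => (t₁ ε) ^ 2 / ε) l (nhds (2 / κ)) := by
    have := hq.inv₀ (by positivity)
    have h2 : (κ / 2 : ℝ)⁻¹ = 2 / κ := by field_simp
    rw [h2] at this
    refine this.congr fun ε => ?_
    rw [hqdef]; simp [inv_div]
  set F : ℝ → ℝ := fun ε => -(j / 3 + 2 * ρ ε) / (κ * (1 + Real.sqrt (2 * q ε / κ))) * ((t₁ ε) ^ 2 / ε) + j / (3 * κ ^ 2) with hFdef
  have hF : Tendsto F l (nhds 0) := by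
    have hnum : Tendsto (fun ε => -(j / 3 + 2 * ρ ε)) l (nhds (-(j / 3))) := by
      have := ((hρlim.const_mul 2).const_add (j / 3)).neg
      simpa using this
    have hden : Tendsto (fun ε => κ * (1 + Real.sqrt (2 * q ε / κ))) l (nhds (κ * 2)) := by
      convert (hS.const_add 1).const_mul κ using 2
      norm_num
    have := ((hnum.div hden (by positivity)).mul hinv).add (tendsto_const_nhds (x := j / (3 * κ ^ 2)))
    have hval : -(j / 3) / (κ * 2) * (2 / κ) + j / (3 * κ ^ 2) = 0 := by
      field_simp
      ring
    rw [hval] at this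
    exact this
  have hne : ∀ᶠ ε in l, ε ≠ 0 := by
    rw [hl]
    filter_upwards [self_mem_nhdsWithin] with ε hε
    exact ne_of_gt hε
  rw [isLittleO_iff_tendsto' (hne.mono fun ε hε h0 => absurd h0 hε)]
  refine hF.congr' ?_
  filter_upwards [htpos, hkey, hmem] with ε ht hk hε
  have hεpos : (0:ℝ) < ε := hε.1
  set t := t₁ ε with htdef
  set S := Real.sqrt (2 * q ε / κ) with hSdef
  have hqpos : 0 < q ε := by rw [hqdef]; positivity
  have hS0 : 0 ≤ S := Real.sqrt_nonneg _
  have hSsq : S ^ 2 = 2 * q ε / κ := Real.sq_sqrt (by positivity)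
  have ht' : t ≠ 0 := ne_of_gt ht
  have hε' : ε ≠ 0 := ne_of_gt hεpos
  have hden : κ * (1 + S) ≠ 0 := by positivity
  have hsqrt : Real.sqrt (2 * ε / κ) = t * S := by
    rw [hSdef, hqdef]
    simp only
    rw [show 2 * (ε / t ^ 2) / κ = (2 * ε / κ) * (t⁻¹) ^ 2 by field_simp]
    rw [Real.sqrt_mul (by positivity), Real.sqrt_sq (by positivity)]
    field_simp
  have hSsq' : κ * S ^ 2 * t ^ 2 = 2 * ε := by
    rw [hSsq, hqdef]
    field_simp
    rw [← htdef]; field_simp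
  have hA' : (t - t * S) * (κ * (1 + S)) * t = -((j / 3 + 2 * ρ ε) * t ^ 2) * t := by
    linear_combination -hSsq' - 2 * hk
  have hA'' : (t - t * S) * (κ * (1 + S)) = -((j / 3 + 2 * ρ ε) * t ^ 2) :=
    mul_right_cancel₀ ht' hA'
  have hA : t - t * S = -((j / 3 + 2 * ρ ε) * t ^ 2) / (κ * (1 + S)) :=
    (eq_div_iff hden).mpr hA''
  rw [hFdef]
  simp only
  rw [hsqrt]
  set R := ρ ε with hRdef
  rw [← hSdef, ← htdef]
  clear_value S
  clear_value t
  clear_value R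
  clear hk hSsq hSsq' hA' hA'' hsqrt hqpos
  rw [show t - (t * S - j / (3 * κ ^ 2) * ε) = (t - t * S) + j / (3 * κ ^ 2) * ε by ring, hA]
  have hκ' : κ ≠ 0 := ne_of_gt hκ
  field_simp
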